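/- Let T: V → g be an O-operator on a bimodule (V; L, R) over a pre-Lie algebra (g, ·). Then the operation u ·^T v = L_{T(u)} v + R_{T(v)} u defines a pre-Lie algebra structure on V, and T is a pre-Lie algebra homomorphism from (V, ·^T) to (g, ·). -/
import Mathlib


def PreLieFn {g : Type*} [AddCommGroup g] (m : g → g → g) : Prop :=
  ∀ x y z : g, m (m x y) z - m x (m y z) = m (m y x) z - m y (m x z)

def BimodFn {g V : Type*} [AddCommGroup g] [AddCommGroup V]
    (m : g → g → g) (L R : g → V → V) : Prop :=
  (∀ (x y : g) (u : V), L x (L y u) - L (m x y) u = L y (L x u) - L (m y x) u) ∧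
  (∀ (x y : g) (u : V), L x (R y u) - R y (L x u) = R (m x y) u - R y (R x u))

/-- The O-operator condition. -/
def IsOOp {K g V : Type*} [Field K] [AddCommGroup g] [Module K g]
    [AddCommGroup V] [Module K V]
    (m : g →ₗ[K] g →ₗ[K] g) (L R : g →ₗ[K] Module.End K V) (T : V →ₗ[K] g) : Prop :=
  ∀ u v : V, m (T u) (T v) = T (L (T u) v + R (T v) u)

/-- for an O-operator `T`, `u ·^T v = L_{T u} v + R_{T v} u` is a
pre-Lie multiplication on `V` and `T` is a homomorphism to `(g, ·)`. -/
theorem oop_induced_preLie {K g V : Type*} [Field K]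
    [AddCommGroup g] [Module K g] [AddCommGroup V] [Module K V]
    (m : g →ₗ[K] g →ₗ[K] g) (hm : PreLieFn (fun x y => m x y))
    (L R : g →ₗ[K] Module.End K V)
    (hb : BimodFn (fun x y => m x y) (fun x u => L x u) (fun x u => R x u))
    (T : V →ₗ[K] g) (hT : IsOOp m L R T) :
    PreLieFn (fun u v : V => L (T u) v + R (T v) u) ∧
    (∀ u v : V, T (L (T u) v + R (T v) u) = m (T u) (T v)) := by
  obtain ⟨hb1, hb2⟩ := hb
  constructor
  · intro u v w
    simp only
    rw [← hT u v, ← hT v w, ← hT u w, ← hT v u]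
    have h1 := hb1 (T u) (T v) w
    have h2 := hb2 (T u) (T w) v
    have h3 := hb2 (T v) (T w) u
    simp only [map_add, LinearMap.add_apply] at h1 h2 h3 ⊢
    linear_combination (norm := abel) -h1 - h2 + h3
  · intro u v
    exact (hT u v).symm
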